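/- Let V > 0 and c > 0, and let H : [0, T) → R be a differentiable function satisfying H'(t) + H(t)²/V ≤ −c for all t ∈ [0, T). Then T ≤ √(V/c) · ( arctan( H(0) / √(V c) ) + π/2 ); in particular T ≤ π √(V/c), and there exists no such differentiable function defined on all of [0, ∞). -/

import Mathlib

open Real Set

lemma riccati_key (V c T : ℝ) (hV : 0 < V) (hc : 0 < c) (H : ℝ → ℝ)
    (hdiff : ∀ t ∈ Ico (0 : ℝ) T, DifferentiableAt ℝ H t)
    (hineq : ∀ t ∈ Ico (0 : ℝ) T, deriv H t + (H t) ^ 2 / V ≤ -c) :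
    T ≤ Real.sqrt (V / c) * (Real.arctan (H 0 / Real.sqrt (V * c)) + π / 2) := by
  set sv := Real.sqrt V with hsvdef
  set sc := Real.sqrt c with hscdef
  have hsv : 0 < sv := Real.sqrt_pos.mpr hV
  have hsc : 0 < sc := Real.sqrt_pos.mpr hc
  have hsv2 : sv ^ 2 = V := Real.sq_sqrt hV.le
  have hsc2 : sc ^ 2 = c := Real.sq_sqrt hc.le
  have hmul : Real.sqrt (V * c) = sv * sc := Real.sqrt_mul hV.le c
  have hdivVc : Real.sqrt (V / c) = sv / sc := Real.sqrt_div hV.le c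
  set f : ℝ → ℝ := fun t => Real.arctan (H t / (sv * sc)) + (sc / sv) * t with hf
  have hanti : AntitoneOn f (Ico (0 : ℝ) T) := by
    apply antitoneOn_of_deriv_nonpos (convex_Ico 0 T)
    · apply ContinuousOn.add
      · apply Real.continuous_arctan.comp_continuousOn
        exact ContinuousOn.div_const
          (fun t ht => (hdiff t ht).continuousAt.continuousWithinAt) _
      · exact (continuous_const.mul continuous_id).continuousOn
    · intro x hx
      rw [interior_Ico] at hx
      have hx' : x ∈ Ico (0:ℝ) T := ⟨hx.1.le, hx.2⟩
      exact ((Real.differentiable_arctan.differentiableAt).comp x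
        ((hdiff x hx').div_const _)).add (differentiableAt_id.const_mul _) |>.differentiableWithinAt
    · intro x hx
      rw [interior_Ico] at hx
      have hx' : x ∈ Ico (0:ℝ) T := ⟨hx.1.le, hx.2⟩
      have hH := (hdiff x hx').hasDerivAt
      have h1 : HasDerivAt (fun t => Real.arctan (H t / (sv * sc)))
          ((1 / (1 + (H x / (sv * sc)) ^ 2)) * (deriv H x / (sv * sc))) x := by
        exact (Real.hasDerivAt_arctan _).comp x (hH.div_const _)
      have h2 : HasDerivAt f
          ((1 / (1 + (H x / (sv * sc)) ^ 2)) * (deriv H x / (sv * sc)) + sc / sv) x := by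
        exact (h1.add ((hasDerivAt_id x).const_mul (sc / sv))).congr_deriv (by simp)
      rw [h2.deriv]
      have hd := hineq x hx'
      set h := H x with hh
      set d := deriv H x with hdd
      have hd' : d ≤ -c - h ^ 2 / V := by linarith
      have hA : (0:ℝ) < 1 + (h / (sv * sc)) ^ 2 := by positivity
      have : 1 / (1 + (h / (sv * sc)) ^ 2) * (d / (sv * sc)) ≤ -(sc / sv) := by
        rw [div_mul_div_comm, one_mul, div_le_iff₀ (by positivity)]
        have e2 : -(sc / sv) * ((1 + (h / (sv * sc)) ^ 2) * (sv * sc))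
            = -c - h ^ 2 / V := by
          rw [← hsv2, ← hsc2]
          field_simp
          ring
        rw [e2]; exact hd'
      linarith
  -- from antitone: for t ∈ Ico 0 T, t < bound
  have hbound : ∀ t ∈ Ico (0:ℝ) T,
      t < Real.sqrt (V / c) * (Real.arctan (H 0 / Real.sqrt (V * c)) + π / 2) := by
    intro t ht
    have h0 : (0:ℝ) ∈ Ico (0:ℝ) T := ⟨le_refl 0, lt_of_le_of_lt ht.1 ht.2⟩
    have := hanti h0 ht ht.1
    simp only [hf, mul_zero, add_zero] at this
    have harc : -(π/2) < Real.arctan (H t / (sv * sc)) := Real.neg_pi_div_two_lt_arctan _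
    have hlt : (sc / sv) * t < Real.arctan (H 0 / (sv * sc)) + π / 2 := by linarith
    rw [hdivVc, hmul]
    rw [div_mul_eq_mul_div, lt_div_iff₀ hsc]
    calc t * sc = sv * ((sc / sv) * t) := by field_simp
    _ < sv * (Real.arctan (H 0 / (sv * sc)) + π / 2) := by
        exact (mul_lt_mul_iff_right₀ hsv).mpr hlt
  by_contra hcon
  push_neg at hcon
  set B := Real.sqrt (V / c) * (Real.arctan (H 0 / Real.sqrt (V * c)) + π / 2) with hB
  have hBpos : 0 < B := by
    apply mul_pos
    · rw [hdivVc]; positivity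
    · have := Real.neg_pi_div_two_lt_arctan (H 0 / Real.sqrt (V * c)); linarith
  have ht : (B + T) / 2 ∈ Ico (0:ℝ) T := ⟨by linarith, by linarith⟩
  have := hbound _ ht
  linarith

theorem riccati_inequality_blowup_time
    (V c T : ℝ) (hV : 0 < V) (hc : 0 < c) (H : ℝ → ℝ)
    (hdiff : ∀ t ∈ Ico (0 : ℝ) T, DifferentiableAt ℝ H t)
    (hineq : ∀ t ∈ Ico (0 : ℝ) T, deriv H t + (H t) ^ 2 / V ≤ -c) :
    T ≤ Real.sqrt (V / c) * (Real.arctan (H 0 / Real.sqrt (V * c)) + π / 2) ∧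
    T ≤ π * Real.sqrt (V / c) ∧
    ¬∃ G : ℝ → ℝ, ∀ t ∈ Ici (0 : ℝ),
      DifferentiableAt ℝ G t ∧ deriv G t + (G t) ^ 2 / V ≤ -c := by
  have h1 := riccati_key V c T hV hc H hdiff hineq
  refine ⟨h1, ?_, ?_⟩
  · have harc : Real.arctan (H 0 / Real.sqrt (V * c)) + π / 2 ≤ π := by
      have := Real.arctan_lt_pi_div_two (H 0 / Real.sqrt (V * c)); linarith
    calc T ≤ _ := h1
    _ ≤ Real.sqrt (V / c) * π := by
        exact mul_le_mul_of_nonneg_left harc (Real.sqrt_nonneg _)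
    _ = π * Real.sqrt (V / c) := mul_comm _ _
  · rintro ⟨G, hG⟩
    set B := Real.sqrt (V / c) * (Real.arctan (G 0 / Real.sqrt (V * c)) + π / 2) with hB
    have := riccati_key V c (B + 1) hV hc G
      (fun t ht => (hG t ht.1).1) (fun t ht => (hG t ht.1).2)
    linarith
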